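/- Let d ≥ 2 and 0 ≤ p ≤ 1, let E(ρ) = (1−p)·ρ + (p/d)·Tr(ρ)·1 be the d-dimensional depolarizing channel, set a = d²/(d² + p − d²p), and define M(ρ) = (d·Tr(ρ)·1 − ρ)/(d² − 1). Then (i) M is a quantum channel, i.e., there exists a finite family of Kraus operators K_i with ∑ K_i† K_i = 1 and M(ρ) = ∑ K_i ρ K_i† for all ρ; and (ii) for every d×d unitary U and every d×d matrix ρ, UρU† = a·E(UρU†) − (a−1)·M(UρU†). (This exhibits a feasible decomposition proving the upper bound R⁺_depol(U) ≤ (d²−1)p/(d² + p − d²p) of Theorem 2 for d-dimensional depolarizing noise.) -/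

import Mathlib

open Matrix

/-- A quantum channel (CPTP map) on `d×d` complex matrices: a map admitting a finite
family of Kraus operators `K i` with `∑ Kᴴ K = 1`. -/
def IsQuantumChannel {d : ℕ} (F : Matrix (Fin d) (Fin d) ℂ → Matrix (Fin d) (Fin d) ℂ) : Prop :=
  ∃ (k : ℕ) (K : Fin k → Matrix (Fin d) (Fin d) ℂ),
    (∑ i, (K i)ᴴ * K i) = 1 ∧ ∀ ρ, F ρ = ∑ i, K i * ρ * (K i)ᴴ


noncomputable def omC (d : ℕ) : ℂ := Complex.exp (2 * Real.pi * Complex.I / d)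

lemma om_star_mul (d : ℕ) : star (omC d) * omC d = 1 := by
  have h1 : star (omC d) = Complex.exp (-(2 * Real.pi * Complex.I / d)) := by
    rw [omC, Complex.star_def, ← Complex.exp_conj]
    congr 1
    simp [map_div₀, Complex.conj_I, map_ofNat]
    ring
  rw [h1, omC, ← Complex.exp_add]
  simp

lemma om_pow_d (d : ℕ) (hd : d ≠ 0) : omC d ^ d = 1 :=
  (Complex.isPrimitiveRoot_exp d hd).pow_eq_one

lemma fourier_sum (d : ℕ) (hd : d ≠ 0) (s t : Fin d) :
    ∑ k : Fin d, omC d ^ ((k:ℕ)*(s:ℕ)) * star (omC d ^ ((k:ℕ)*(t:ℕ)))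
    = if s = t then (d:ℂ) else 0 := by
  have hprim := Complex.isPrimitiveRoot_exp d hd
  have hωd : omC d ^ d = 1 := om_pow_d d hd
  have hstar : star (omC d) * omC d = 1 := om_star_mul d
  have hsinv : star (omC d) = (omC d)⁻¹ := eq_inv_of_mul_eq_one_left hstar
  set ω : ℂ := omC d with hω
  set ζ : ℂ := ω ^ (s:ℕ) * (star ω) ^ (t:ℕ) with hζ
  have hterm : ∀ k : Fin d,
      ω ^ ((k:ℕ)*(s:ℕ)) * star (ω ^ ((k:ℕ)*(t:ℕ))) = ζ ^ (k:ℕ) := by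
    intro k
    rw [star_pow, mul_comm (k:ℕ) (s:ℕ), mul_comm (k:ℕ) (t:ℕ), pow_mul, pow_mul,
      hζ, mul_pow]
  rw [Finset.sum_congr rfl fun k _ => hterm k]
  by_cases hst : s = t
  · subst hst
    have hz1 : ζ = 1 := by rw [hζ, ← mul_pow, mul_comm, hstar, one_pow]
    simp [hz1]
  · have hζd : ζ ^ d = 1 := by
      rw [hζ, mul_pow, ← pow_mul, ← pow_mul, mul_comm (s:ℕ) d, mul_comm (t:ℕ) d,
        pow_mul, pow_mul, hωd, ← star_pow, hωd]
      simp
    have hζ1 : ζ ≠ 1 := by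
      intro h
      apply hst
      rw [hζ, hsinv, inv_pow] at h
      have h2 : ω ^ (s:ℕ) = ω ^ (t:ℕ) :=
        (mul_inv_eq_one₀ (pow_ne_zero _ (Complex.exp_ne_zero _))).mp h
      exact Fin.ext (hprim.pow_inj s.isLt t.isLt h2)
    rw [Fin.sum_univ_eq_sum_range (fun k => ζ ^ k) d, geom_sum_eq hζ1, hζd]
    simp [hst]

lemma stdBM_conjT {d : ℕ} (i j : Fin d) (c : ℂ) :
    (Matrix.single i j c)ᴴ = Matrix.single j i (star c) := by
  ext a b
  simp only [conjTranspose_apply, Matrix.single, of_apply]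
  rw [apply_ite star, star_zero]
  congr 1
  simp only [eq_iff_iff]
  tauto

lemma sum_stdBM_diag_one {d : ℕ} :
    ∑ j : Fin d, Matrix.single j j (1:ℂ) = 1 := by
  ext s t
  rw [Matrix.sum_apply]
  by_cases h : s = t
  · subst h
    simp [Matrix.single, Matrix.one_apply, Finset.sum_ite_eq]
  · rw [Finset.sum_eq_zero, Matrix.one_apply_ne h]
    intro j _
    apply Matrix.single_apply_of_ne
    rintro ⟨rfl, rfl⟩
    exact h rfl

lemma sum_smul_stdBM_diag {d : ℕ} (f : Fin d → ℂ) :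
    ∑ i : Fin d, f i • Matrix.single i i (1:ℂ) = Matrix.diagonal f := by
  ext s t
  rw [Matrix.sum_apply]
  by_cases h : s = t
  · subst h
    simp [Matrix.single, Matrix.diagonal_apply, Finset.sum_ite_eq]
  · rw [Finset.sum_eq_zero, Matrix.diagonal_apply_ne _ h]
    intro j _
    rw [Matrix.smul_apply, Matrix.single_apply_of_ne, smul_zero]
    rintro ⟨rfl, rfl⟩
    exact h rfl

lemma sum_ite_eq_sub {β : Type*} [AddCommGroup β] {d : ℕ} (i : Fin d) (C : Fin d → β) :
    ∑ j, (if i = j then 0 else C j) = (∑ j, C j) - C i := by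
  have h : ∀ j, (if i = j then (0:β) else C j) = C j - (if i = j then C j else 0) := by
    intro j; split <;> simp
  rw [Finset.sum_congr rfl fun j _ => h j, Finset.sum_sub_distrib, Finset.sum_ite_eq,
    if_pos (Finset.mem_univ i)]

lemma sum_ite_eq_sub' {β : Type*} [AddCommGroup β] {d : ℕ} (i : Fin d) (C : Fin d → β) :
    ∑ j, (if j = i then 0 else C j) = (∑ j, C j) - C i := by
  have h : ∀ j, (if j = i then (0:β) else C j) = C j - (if j = i then C j else 0) := by
    intro j; split <;> simp
  rw [Finset.sum_congr rfl fun j _ => h j, Finset.sum_sub_distrib, Finset.sum_ite_eq',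
    if_pos (Finset.mem_univ i)]

noncomputable def ceC (d : ℕ) : ℂ := ((Real.sqrt ((d:ℝ) / ((d:ℝ)^2 - 1)) : ℝ) : ℂ)
noncomputable def czC (d : ℕ) : ℂ := ((Real.sqrt (((d:ℝ)^2 - 1)⁻¹) : ℝ) : ℂ)

noncomputable def gOff (d : ℕ) (q : Fin d × Fin d) : Matrix (Fin d) (Fin d) ℂ :=
  if q.1 = q.2 then 0 else ceC d • Matrix.single q.1 q.2 1

noncomputable def gDiag (d : ℕ) [NeZero d] (k : Fin d) : Matrix (Fin d) (Fin d) ℂ :=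
  if k = 0 then 0 else czC d • Matrix.diagonal (fun s : Fin d => omC d ^ ((k:ℕ)*(s:ℕ)))

lemma ce_star (d : ℕ) : star (ceC d) = ceC d := Complex.conj_ofReal _
lemma cz_star (d : ℕ) : star (czC d) = czC d := Complex.conj_ofReal _

lemma ce_sq (d : ℕ) (hd : 2 ≤ d) : ceC d * ceC d = (d:ℂ) / ((d:ℂ)^2 - 1) := by
  have h2 : (2:ℝ) ≤ (d:ℝ) := by exact_mod_cast hd
  have h : (0:ℝ) ≤ (d:ℝ) / ((d:ℝ)^2 - 1) := by
    apply div_nonneg <;> nlinarith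
  rw [ceC, ← Complex.ofReal_mul, Real.mul_self_sqrt h]
  push_cast
  ring

lemma cz_sq (d : ℕ) (hd : 2 ≤ d) : czC d * czC d = ((d:ℂ)^2 - 1)⁻¹ := by
  have h2 : (2:ℝ) ≤ (d:ℝ) := by exact_mod_cast hd
  have h : (0:ℝ) ≤ (((d:ℝ)^2 - 1)⁻¹) := by
    apply inv_nonneg.2; nlinarith
  rw [czC, ← Complex.ofReal_mul, Real.mul_self_sqrt h]
  push_cast [Complex.ofReal_inv]
  norm_num

lemma gOff_conj_mul (d : ℕ) (q : Fin d × Fin d) :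
    (gOff d q)ᴴ * gOff d q =
      if q.1 = q.2 then 0 else (ceC d * ceC d) • Matrix.single q.2 q.2 1 := by
  rw [gOff]
  split
  · simp
  · rw [conjTranspose_smul, ce_star, stdBM_conjT, star_one, Matrix.smul_mul,
      Matrix.mul_smul, smul_smul, Matrix.single_mul_single_same, one_mul]

lemma gDiag_conj_mul (d : ℕ) [NeZero d] (k : Fin d) :
    (gDiag d k)ᴴ * gDiag d k = if k = 0 then 0 else (czC d * czC d) • 1 := by
  rw [gDiag]
  split
  · simp
  · rw [conjTranspose_smul, cz_star, diagonal_conjTranspose, Matrix.smul_mul,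
      Matrix.mul_smul, smul_smul, diagonal_mul_diagonal]
    have hf : (fun i : Fin d => star (omC d ^ ((k:ℕ)*(i:ℕ))) * omC d ^ ((k:ℕ)*(i:ℕ)))
        = fun _ : Fin d => (1:ℂ) :=
      funext fun i => by rw [star_pow, ← mul_pow, om_star_mul, one_pow]
    simp only [Pi.star_apply]
    rw [hf, diagonal_one]

lemma kraus_parts_one (d : ℕ) [NeZero d] (hd : 2 ≤ d) :
    (∑ q : Fin d × Fin d, (gOff d q)ᴴ * gOff d q)
      + (∑ k : Fin d, (gDiag d k)ᴴ * gDiag d k) = 1 := by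
  have hd2 : ((d:ℂ)^2 - 1) ≠ 0 := by
    have h2 : (2:ℝ) ≤ (d:ℝ) := by exact_mod_cast hd
    have : ((d:ℝ)^2 - 1) ≠ 0 := by nlinarith
    exact_mod_cast fun h => this (by exact_mod_cast h)
  rw [Finset.sum_congr rfl fun q _ => gOff_conj_mul d q,
    Finset.sum_congr rfl fun k _ => gDiag_conj_mul d k,
    Fintype.sum_prod_type]
  have h1 : ∀ i : Fin d,
      ∑ j : Fin d, (if i = j then (0 : Matrix (Fin d) (Fin d) ℂ)
          else (ceC d * ceC d) • Matrix.single j j 1)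
      = (ceC d * ceC d) • 1 - (ceC d * ceC d) • Matrix.single i i 1 := by
    intro i
    rw [sum_ite_eq_sub, ← Finset.smul_sum, sum_stdBM_diag_one]
  rw [Finset.sum_congr rfl fun i _ => h1 i, Finset.sum_sub_distrib,
    Finset.sum_const, Finset.card_univ, Fintype.card_fin,
    ← Finset.smul_sum, sum_stdBM_diag_one,
    sum_ite_eq_sub' 0 (fun _ => (czC d * czC d) • 1),
    Finset.sum_const, Finset.card_univ, Fintype.card_fin,
    ce_sq d hd, cz_sq d hd]
  match_scalars
  field_simp
  ring

lemma Eij_rho_Eji {d : ℕ} (i j : Fin d) (ρ : Matrix (Fin d) (Fin d) ℂ) :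
    Matrix.single i j (1:ℂ) * ρ * Matrix.single j i 1 = Matrix.single i i (ρ j j) := by
  ext a b
  rw [mul_assoc]
  by_cases ha : a = i
  · subst ha
    rw [Matrix.single_mul_apply_same, one_mul]
    by_cases hb : b = a
    · subst hb
      rw [Matrix.mul_single_apply_same, mul_one,
        Matrix.single_apply_same]
    · rw [Matrix.mul_single_apply_of_ne _ _ _ _ _ hb,
        Matrix.single_apply_of_ne]
      rintro ⟨-, h2⟩; exact hb h2.symm
  · rw [Matrix.single_mul_apply_of_ne _ _ _ _ _ ha,
      Matrix.single_apply_of_ne]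
    rintro ⟨h1, -⟩; exact ha h1.symm

lemma gOff_action {d : ℕ} (q : Fin d × Fin d) (ρ : Matrix (Fin d) (Fin d) ℂ) :
    gOff d q * ρ * (gOff d q)ᴴ =
      if q.1 = q.2 then 0
      else (ceC d * ceC d) • (ρ q.2 q.2 • Matrix.single q.1 q.1 1) := by
  rw [gOff]
  split
  · simp
  · rw [conjTranspose_smul, ce_star, stdBM_conjT, star_one, Matrix.smul_mul,
      Matrix.smul_mul, Matrix.mul_smul, smul_smul, Eij_rho_Eji,
      show Matrix.single q.1 q.1 (ρ q.2 q.2) = ρ q.2 q.2 • Matrix.single q.1 q.1 (1:ℂ) from by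
        rw [Matrix.smul_single, smul_eq_mul, mul_one]]

lemma sum_gOff_action {d : ℕ} (ρ : Matrix (Fin d) (Fin d) ℂ) :
    ∑ q : Fin d × Fin d, gOff d q * ρ * (gOff d q)ᴴ =
      (ceC d * ceC d) • (ρ.trace • (1 : Matrix (Fin d) (Fin d) ℂ)
        - Matrix.diagonal (fun i => ρ i i)) := by
  rw [Finset.sum_congr rfl fun q _ => gOff_action q ρ, Fintype.sum_prod_type]
  have h1 : ∀ i : Fin d,
      ∑ j : Fin d, (if i = j then (0 : Matrix (Fin d) (Fin d) ℂ)
          else (ceC d * ceC d) • (ρ j j • Matrix.single i i 1))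
      = (ceC d * ceC d) • (ρ.trace • Matrix.single i i 1)
        - (ceC d * ceC d) • (ρ i i • Matrix.single i i 1) := by
    intro i
    rw [sum_ite_eq_sub, ← Finset.smul_sum, ← Finset.sum_smul]
    rw [show ρ.trace = ∑ j, ρ j j from by simp [Matrix.trace, Matrix.diag]]
  rw [Finset.sum_congr rfl fun i _ => h1 i, Finset.sum_sub_distrib,
    ← Finset.smul_sum, ← Finset.smul_sum, ← Finset.smul_sum,
    sum_stdBM_diag_one, sum_smul_stdBM_diag, smul_sub]

lemma sum_gDiag_action {d : ℕ} [NeZero d] (hd : d ≠ 0) (ρ : Matrix (Fin d) (Fin d) ℂ) :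
    ∑ k : Fin d, gDiag d k * ρ * (gDiag d k)ᴴ =
      (czC d * czC d) • ((d:ℂ) • Matrix.diagonal (fun i => ρ i i) - ρ) := by
  ext s t
  rw [Matrix.sum_apply]
  have hterm : ∀ k : Fin d, (gDiag d k * ρ * (gDiag d k)ᴴ) s t
      = if k = 0 then 0
        else (czC d * czC d) * (omC d ^ ((k:ℕ)*(s:ℕ)) * star (omC d ^ ((k:ℕ)*(t:ℕ))) * ρ s t) := by
    intro k
    rw [gDiag]
    split
    · simp
    · rw [conjTranspose_smul, cz_star, diagonal_conjTranspose]
      simp only [Matrix.smul_mul, Matrix.mul_smul, Matrix.smul_apply,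
        Matrix.mul_diagonal, Matrix.diagonal_mul, Pi.star_apply, smul_eq_mul]
      ring
  rw [Finset.sum_congr rfl fun k _ => hterm k,
    sum_ite_eq_sub' 0 (fun k => (czC d * czC d) * (omC d ^ ((k:ℕ)*(s:ℕ)) * star (omC d ^ ((k:ℕ)*(t:ℕ))) * ρ s t))]
  have hsum : ∑ k : Fin d, (czC d * czC d) * (omC d ^ ((k:ℕ)*(s:ℕ)) * star (omC d ^ ((k:ℕ)*(t:ℕ))) * ρ s t)
      = (czC d * czC d) * ((if s = t then (d:ℂ) else 0) * ρ s t) := by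
    rw [← Finset.mul_sum, ← fourier_sum d hd s t, Finset.sum_mul]
  rw [hsum]
  simp only [Fin.val_zero, Nat.zero_mul, pow_zero, star_one, one_mul,
    Matrix.smul_apply, Matrix.sub_apply, Matrix.smul_apply, Matrix.diagonal_apply,
    smul_eq_mul]
  by_cases hst : s = t
  · subst hst
    simp only [eq_self_iff_true, if_true, mul_one]
    ring
  · simp only [if_neg hst, mul_zero, zero_mul, zero_sub, mul_comm]
    ring

lemma M_isChannel (d : ℕ) (hd : 2 ≤ d) :
    IsQuantumChannel (fun ρ : Matrix (Fin d) (Fin d) ℂ =>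
      (((d : ℝ)^2 - 1 : ℝ) : ℂ)⁻¹ • (((d:ℂ) * ρ.trace) • (1 : Matrix (Fin d) (Fin d) ℂ) - ρ)) := by
  haveI : NeZero d := ⟨by omega⟩
  have hd2 : ((d:ℂ)^2 - 1) ≠ 0 := by
    have h2 : (2:ℝ) ≤ (d:ℝ) := by exact_mod_cast hd
    have : ((d:ℝ)^2 - 1) ≠ 0 := by nlinarith
    exact_mod_cast fun h => this (by exact_mod_cast h)
  have hs : ∀ φ : Matrix (Fin d) (Fin d) ℂ → Matrix (Fin d) (Fin d) ℂ,
      (∑ n : Fin (d*d + d),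
        φ (Sum.elim (fun m => gOff d (finProdFinEquiv.symm m)) (gDiag d) (finSumFinEquiv.symm n)))
      = (∑ q : Fin d × Fin d, φ (gOff d q)) + ∑ k : Fin d, φ (gDiag d k) := by
    intro φ
    calc (∑ n : Fin (d*d + d),
          φ (Sum.elim (fun m => gOff d (finProdFinEquiv.symm m)) (gDiag d) (finSumFinEquiv.symm n)))
        = ∑ x : Fin (d*d) ⊕ Fin d,
            φ (Sum.elim (fun m => gOff d (finProdFinEquiv.symm m)) (gDiag d) x) :=
          Equiv.sum_comp finSumFinEquiv.symm
            (fun x => φ (Sum.elim (fun m => gOff d (finProdFinEquiv.symm m)) (gDiag d) x))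
      _ = (∑ q : Fin d × Fin d, φ (gOff d q)) + ∑ k : Fin d, φ (gDiag d k) := by
          rw [Fintype.sum_sum_type]
          simp only [Sum.elim_inl, Sum.elim_inr]
          rw [Equiv.sum_comp finProdFinEquiv.symm (fun q => φ (gOff d q))]
  refine ⟨d*d + d,
    fun n => Sum.elim (fun m => gOff d (finProdFinEquiv.symm m)) (gDiag d) (finSumFinEquiv.symm n),
    ?_, ?_⟩
  · exact (hs fun A => Aᴴ * A).trans (kraus_parts_one d hd)
  · intro ρ
    refine Eq.symm (((hs fun A => A * ρ * Aᴴ).trans ?_))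
    rw [sum_gOff_action, sum_gDiag_action (NeZero.ne d), ce_sq d hd, cz_sq d hd]
    match_scalars
    · push_cast
      field_simp
    · push_cast
      field_simp
      ring
    · push_cast
      field_simp

/-- Theorem 2 (feasible decomposition for `d`-dimensional depolarizing noise): with
`E(ρ) = (1−p)ρ + (p/d)·Tr(ρ)·1`, `a = d²/(d²+p−d²p)` and
`M(ρ) = (d·Tr(ρ)·1 − ρ)/(d²−1)`, the map `M` is a quantum channel and every unitary `U`
satisfies `UρU† = a·E(UρU†) − (a−1)·M(UρU†)`; hence
`R⁺_depol(U) ≤ (d²−1)p/(d²+p−d²p)`. -/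
theorem d_dim_depolarizing_feasible_decomposition (d : ℕ) (hd : 2 ≤ d)
    (p : ℝ) (hp0 : 0 ≤ p) (hp1 : p ≤ 1)
    (E : Matrix (Fin d) (Fin d) ℂ → Matrix (Fin d) (Fin d) ℂ)
    (hE : ∀ ρ, E ρ = ((1 - p : ℝ) : ℂ) • ρ + (((p / d : ℝ) : ℂ) * ρ.trace) • (1 : Matrix (Fin d) (Fin d) ℂ))
    (a : ℝ) (ha : a = (d : ℝ) ^ 2 / ((d : ℝ) ^ 2 + p - (d : ℝ) ^ 2 * p))
    (M : Matrix (Fin d) (Fin d) ℂ → Matrix (Fin d) (Fin d) ℂ)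
    (hM : ∀ ρ, M ρ = (((d : ℝ) ^ 2 - 1 : ℝ) : ℂ)⁻¹ •
        (((d : ℂ) * ρ.trace) • (1 : Matrix (Fin d) (Fin d) ℂ) - ρ)) :
    IsQuantumChannel M ∧
    ∀ U : Matrix (Fin d) (Fin d) ℂ, U ∈ Matrix.unitaryGroup (Fin d) ℂ →
      ∀ ρ : Matrix (Fin d) (Fin d) ℂ,
        U * ρ * Uᴴ = (a : ℂ) • E (U * ρ * Uᴴ) - ((a : ℂ) - 1) • M (U * ρ * Uᴴ) := by
  have hd0 : (0:ℝ) < (d:ℝ) := by positivity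
  have hd2r : (2:ℝ) ≤ (d:ℝ) := by exact_mod_cast hd
  have h1 : (1:ℝ) ≤ (d : ℝ) ^ 2 + p - (d : ℝ) ^ 2 * p := by
    nlinarith [sq_nonneg ((d:ℝ) - 1), hd2r]
  have h2 : (0:ℝ) < (d : ℝ)^2 - 1 := by nlinarith
  have hden : ((d : ℂ) ^ 2 + (p:ℂ) - (d : ℂ) ^ 2 * p) ≠ 0 := by
    have : ((d : ℝ) ^ 2 + p - (d : ℝ) ^ 2 * p) ≠ 0 := by linarith
    exact_mod_cast fun h => this (by exact_mod_cast h)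
  have hd2 : ((d:ℂ)^2 - 1) ≠ 0 := by
    have : ((d : ℝ)^2 - 1) ≠ 0 := ne_of_gt h2
    exact_mod_cast fun h => this (by exact_mod_cast h)
  have hdc : (d:ℂ) ≠ 0 := by exact_mod_cast hd0.ne'
  have haC : (a:ℂ) = (d : ℂ) ^ 2 / ((d : ℂ) ^ 2 + p - (d : ℂ) ^ 2 * p) := by
    rw [ha]; push_cast; ring
  constructor
  · have h := M_isChannel d hd
    have hMfun : M = fun ρ : Matrix (Fin d) (Fin d) ℂ =>
        (((d : ℝ)^2 - 1 : ℝ) : ℂ)⁻¹ • (((d:ℂ) * ρ.trace) • (1 : Matrix (Fin d) (Fin d) ℂ) - ρ) :=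
      funext hM
    rw [hMfun]
    exact h
  · intro U _ ρ
    rw [hE, hM]
    match_scalars
    · rw [haC]; field_simp; ring
    · rw [haC]; field_simp; ring
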